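/- Consider full binary trees (each node is a leaf or has exactly two children). For a tree t, let leaves(t) be its number of leaves, and define cost recursively by cost(leaf) = 1 and cost(node l r) = cost(l) + cost(r) + leaves(r). Call t ordered if for every internal node, the left subtree has at least as many leaves as the right subtree. Then for every ordered full binary tree t with leaves(t) = n ≥ 2, cost(t) ≤ 3 · n · log₂ n. -/

import Mathlib

/-- Full binary trees: each node is a leaf or has exactly two children. -/
inductive FullBTree : Type
  | leaf : FullBTree
  | node : FullBTree → FullBTree → FullBTree

namespace FullBTree

/-- Number of leaves of a full binary tree. -/
def leaves : FullBTree → ℕ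
  | leaf => 1
  | node l r => leaves l + leaves r

/-- `cost(leaf) = 1` and `cost(node l r) = cost(l) + cost(r) + leaves(r)`. -/
def cost : FullBTree → ℕ
  | leaf => 1
  | node l r => cost l + cost r + leaves r

/-- A tree is ordered if at every internal node the left subtree has at least as many
leaves as the right subtree. -/
def Ordered : FullBTree → Prop
  | leaf => True
  | node l r => leaves r ≤ leaves l ∧ Ordered l ∧ Ordered r

end FullBTree

lemma FullBTree.one_le_leaves : ∀ t : FullBTree, 1 ≤ t.leaves
  | .leaf => le_refl 1
  | .node l r => by
      have := FullBTree.one_le_leaves l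
      simp [FullBTree.leaves]; omega

lemma FullBTree.cost_key : ∀ t : FullBTree, t.Ordered →
    (t.cost : ℝ) ≤ t.leaves * (1 + Real.logb 2 t.leaves) := by
  intro t
  induction t with
  | leaf => intro _; simp [FullBTree.cost, FullBTree.leaves]
  | node l r ihl ihr =>
    rintro ⟨hzy, hl, hr⟩
    have Hl := ihl hl
    have Hr := ihr hr
    set Y : ℝ := (l.leaves : ℝ) with hY
    set Z : ℝ := (r.leaves : ℝ) with hZ
    have hY1 : (1 : ℝ) ≤ Y := by rw [hY]; exact_mod_cast l.one_le_leaves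
    have hZ1 : (1 : ℝ) ≤ Z := by rw [hZ]; exact_mod_cast r.one_le_leaves
    have hZY : Z ≤ Y := by rw [hY, hZ]; exact_mod_cast hzy
    have hcast : ((FullBTree.node l r).leaves : ℝ) = Y + Z := by
      simp [FullBTree.leaves, hY, hZ]
    have hcost : ((FullBTree.node l r).cost : ℝ) = l.cost + r.cost + Z := by
      simp [FullBTree.cost, hY, hZ]
    have h1 : Real.logb 2 Y ≤ Real.logb 2 (Y + Z) :=
      Real.logb_le_logb_of_le one_lt_two (by linarith) (by linarith)
    have h2' : Real.logb 2 (2 * Z) ≤ Real.logb 2 (Y + Z) :=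
      Real.logb_le_logb_of_le one_lt_two (by linarith) (by linarith)
    have h2 : Real.logb 2 Z ≤ Real.logb 2 (Y + Z) - 1 := by
      have : Real.logb 2 (2 * Z) = 1 + Real.logb 2 Z := by
        rw [Real.logb_mul (by norm_num) (by linarith)]
        simp
      linarith
    rw [hcost, hcast]
    nlinarith [mul_nonneg (by linarith : (0:ℝ) ≤ Y) (by linarith : (0:ℝ) ≤ Real.logb 2 (Y + Z) - Real.logb 2 Y),
      mul_nonneg (by linarith : (0:ℝ) ≤ Z) (by linarith : (0:ℝ) ≤ Real.logb 2 (Y + Z) - 1 - Real.logb 2 Z)]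

/-- every ordered full binary tree `t` with `leaves t = n ≥ 2` satisfies
`cost t ≤ 3 · n · log₂ n`. -/
theorem stmt_8 (t : FullBTree) (ht : t.Ordered) (n : ℕ) (hn : t.leaves = n) (h2 : 2 ≤ n) :
    (t.cost : ℝ) ≤ 3 * n * Real.logb 2 n := by
  have key := t.cost_key ht
  rw [hn] at key
  have hn1 : (1 : ℝ) ≤ Real.logb 2 n := by
    have : Real.logb 2 2 ≤ Real.logb 2 n := by
      exact Real.logb_le_logb_of_le one_lt_two (by norm_num) (by exact_mod_cast h2)
    simpa using this
  have hn2 : (2 : ℝ) ≤ (n : ℝ) := by exact_mod_cast h2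
  nlinarith
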